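/- Let Δ be a 2-dimensional flag-no-square simplicial complex on n vertices, with vertex set linearly ordered, and let K be a field. If the kernel of the simplicial boundary map ∂_2 from the free K-module on the 2-faces of Δ to the free K-module on the edges of Δ is nonzero (equivalently, H_2(Δ; K) ≠ 0), then n ≥ 12. -/

import Mathlib

open Finset

variable {V : Type} [DecidableEq V] [Fintype V]

/-- `K` is (the set of faces of) an abstract simplicial complex on `V`:
nonempty (contains the empty face) and closed under taking subsets. -/
def IsComplex (K : Finset (Finset V)) : Prop :=
  ∅ ∈ K ∧ ∀ σ ∈ K, ∀ τ ⊆ σ, τ ∈ K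

/-- The facets (maximal faces) of `K`. -/
def facets (K : Finset (Finset V)) : Finset (Finset V) :=
  K.filter fun σ => ∀ τ ∈ K, σ ⊆ τ → τ = σ

/-- `K` is pure `d`-dimensional: every facet has `d + 1` vertices. -/
def IsPure (K : Finset (Finset V)) (d : ℕ) : Prop :=
  ∀ σ ∈ facets K, σ.card = d + 1

/-- `fNum K i` is the number of `i`-dimensional faces (faces with `i + 1` vertices). -/
def fNum (K : Finset (Finset V)) (i : ℕ) : ℕ :=
  (K.filter fun σ => σ.card = i + 1).card

/-- `K` is flag: every set of vertices of `K` that are pairwise joined by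
edges of `K` is a face of `K`. -/
def IsFlag (K : Finset (Finset V)) : Prop :=
  ∀ τ : Finset V, (∀ v ∈ τ, ({v} : Finset V) ∈ K) →
    (∀ u ∈ τ, ∀ w ∈ τ, u ≠ w → ({u, w} : Finset V) ∈ K) → τ ∈ K

/-- `K` has no induced 4-cycle: there are no four distinct vertices `a b c d`
with `ab, bc, cd, da` faces and `ac, bd` non-faces. -/
def NoSquare (K : Finset (Finset V)) : Prop :=
  ¬ ∃ a b c d : V, ({a, b, c, d} : Finset V).card = 4 ∧
    ({a, b} : Finset V) ∈ K ∧ ({b, c} : Finset V) ∈ K ∧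
    ({c, d} : Finset V) ∈ K ∧ ({d, a} : Finset V) ∈ K ∧
    ({a, c} : Finset V) ∉ K ∧ ({b, d} : Finset V) ∉ K

/-- Every face with `d` vertices (i.e. of dimension `d - 1`) is contained in
at least two facets. -/
def NoFree (K : Finset (Finset V)) (d : ℕ) : Prop :=
  ∀ σ ∈ K, σ.card = d → 2 ≤ ((facets K).filter fun F => σ ⊆ F).card

/-- The link of a face `σ`. -/
def link (K : Finset (Finset V)) (σ : Finset V) : Finset (Finset V) :=
  K.filter fun τ => τ ∩ σ = ∅ ∧ τ ∪ σ ∈ K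

/-- The simplicial boundary operator (with respect to a linear order on the
vertices): `(∂ c)(σ) = Σ_{v ∉ σ} (-1)^{|{k ∈ σ ∪ {v} : k < v}|} · c(σ ∪ {v})`. -/
def bdry (F : Type) [Field F] {V : Type} [LinearOrder V] [Fintype V] [DecidableEq V]
    (c : Finset V → F) (σ : Finset V) : F :=
  ∑ v ∈ σᶜ, (-1 : F) ^ ((insert v σ).filter fun k => k < v).card * c (insert v σ)

/-- If a 2-dimensional flag-no-square simplicial complex carries a nonzero
2-cycle over a field (i.e. `H₂(Δ; F) ≠ 0`), then it has at least 12 vertices. -/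
theorem twelve_vertices {V : Type} [LinearOrder V] [Fintype V] [DecidableEq V]
    (F : Type) [Field F] (K : Finset (Finset V))
    (hK : IsComplex K) (hvert : ∀ v : V, ({v} : Finset V) ∈ K)
    -- `K` is 2-dimensional
    (hdim : ∀ σ ∈ K, σ.card ≤ 3) (hdim' : ∃ σ ∈ K, σ.card = 3)
    (hflag : IsFlag K) (hns : NoSquare K)
    -- a nonzero 2-chain in the kernel of `∂₂`
    (c : Finset V → F) (hsupp : ∀ σ : Finset V, c σ ≠ 0 → σ ∈ K ∧ σ.card = 3)
    (hc : c ≠ 0)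
    (hcycle : ∀ τ : Finset V, τ.card = 2 → bdry F c τ = 0) :
    12 ≤ Fintype.card V := by
  classical
  have hD : ∀ {a b x : V}, c {a,b,x} ≠ 0 → a ≠ b ∧ a ≠ x ∧ b ≠ x := by
    intro a b x h
    have h3 := (hsupp _ h).2
    refine ⟨?_, ?_, ?_⟩
    · rintro rfl
      have he : ({a,a,x} : Finset V) = {a,x} := by ext z; simp
      rw [he] at h3
      have := Finset.card_insert_le a ({x} : Finset V)
      simp only [Finset.card_singleton] at this; omega
    · rintro rfl
      have he : ({a,b,a} : Finset V) = {a,b} := by ext z; simp; tauto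
      rw [he] at h3
      have := Finset.card_insert_le a ({b} : Finset V)
      simp only [Finset.card_singleton] at this; omega
    · rintro rfl
      have he : ({a,b,b} : Finset V) = {a,b} := by ext z; simp
      rw [he] at h3
      have := Finset.card_insert_le a ({b} : Finset V)
      simp only [Finset.card_singleton] at this; omega
  have hKsub : ∀ {a b x : V}, c {a,b,x} ≠ 0 → (({a,b}:Finset V) ∈ K ∧ ({a,x}:Finset V) ∈ K ∧ ({b,x}:Finset V) ∈ K) := by
    intro a b x h
    have hm := (hsupp _ h).1
    refine ⟨hK.2 _ hm _ ?_, hK.2 _ hm _ ?_, hK.2 _ hm _ ?_⟩ <;>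
      · intro z hz; simp at hz ⊢; tauto
  have hA : ∀ a b x : V, c {a,b,x} ≠ 0 → ∃ y, y ≠ a ∧ y ≠ b ∧ y ≠ x ∧ c {a,b,y} ≠ 0 := by
    intro a b x h
    obtain ⟨hab, hax, hbx⟩ := hD h
    by_contra hcon
    push_neg at hcon
    have hcard : ({a,b} : Finset V).card = 2 := by
      rw [Finset.card_insert_of_notMem (by simp [hab]), Finset.card_singleton]
    have h0 := hcycle {a,b} hcard
    simp only [bdry] at h0
    have hx : x ∈ ({a,b} : Finset V)ᶜ := by
      simp [Finset.mem_compl]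
      exact ⟨Ne.symm hax, Ne.symm hbx⟩
    rw [Finset.sum_eq_single_of_mem x hx ?_] at h0
    · have he : insert x ({a,b} : Finset V) = {a,b,x} := by ext z; simp; tauto
      rw [he] at h0
      rcases mul_eq_zero.mp h0 with h'|h'
      · exact pow_ne_zero _ (by norm_num : (-1 : F) ≠ 0) h'
      · exact h h'
    · intro y hy hyx
      have hya : y ≠ a := by intro hh; subst hh; simp at hy
      have hyb : y ≠ b := by intro hh; subst hh; simp at hy
      have he : insert y ({a,b} : Finset V) = {a,b,y} := by ext z; simp; tauto
      rw [he, hcon y hya hyb hyx, mul_zero]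
  have hB : ∀ p q r s : V, p≠q → p≠r → p≠s → q≠r → q≠s → r≠s →
      ({p,q}:Finset V) ∈ K → ({p,r}:Finset V) ∈ K → ({p,s}:Finset V) ∈ K →
      ({q,r}:Finset V) ∈ K → ({q,s}:Finset V) ∈ K → ({r,s}:Finset V) ∈ K → False := by
    intro p q r s h1 h2 h3 h4 h5 h6 e1 e2 e3 e4 e5 e6
    have hmem : ({p,q,r,s} : Finset V) ∈ K := by
      apply hflag
      · intro z hz; simp at hz
        rcases hz with rfl|rfl|rfl|rfl <;> exact hvert _
      · intro z hz w hw hzw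
        simp at hz hw
        rcases hz with rfl|rfl|rfl|rfl <;> rcases hw with rfl|rfl|rfl|rfl <;>
          first
            | exact absurd rfl hzw
            | assumption
            | (rw [Finset.pair_comm]; assumption)
    have hcard : ({p,q,r,s} : Finset V).card = 4 := by
      rw [Finset.card_insert_of_notMem (by simp [h1,h2,h3]),
        Finset.card_insert_of_notMem (by simp [h4,h5]),
        Finset.card_insert_of_notMem (by simp [h6]), Finset.card_singleton]
    have := hdim _ hmem
    omega
  have hC : ∀ p q r s t : V, q≠p → r≠p → s≠p → t≠p → q≠r → q≠s → q≠t → r≠s → r≠t → s≠t →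
      ({p,q}:Finset V) ∈ K → ({p,r}:Finset V) ∈ K → ({p,s}:Finset V) ∈ K → ({p,t}:Finset V) ∈ K →
      ({q,r}:Finset V) ∈ K → ({r,s}:Finset V) ∈ K → ({s,t}:Finset V) ∈ K → ({t,q}:Finset V) ∈ K → False := by
    intro p q r s t d1 d2 d3 d4 d5 d6 d7 d8 d9 d10 e1 e2 e3 e4 e5 e6 e7 e8
    by_cases hqs : ({q,s} : Finset V) ∈ K
    · exact hB p q r s d1.symm d2.symm d3.symm d5 d6 d8 e1 e2 e3 e5 hqs e6
    by_cases hrt : ({r,t} : Finset V) ∈ K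
    · exact hB p r s t d2.symm d3.symm d4.symm d8 d9 d10 e2 e3 e4 e6 hrt e7
    refine hns ⟨q, r, s, t, ?_, e5, e6, e7, e8, hqs, hrt⟩
    rw [Finset.card_insert_of_notMem (by simp [d5,d6,d7]),
      Finset.card_insert_of_notMem (by simp [d8,d9]),
      Finset.card_insert_of_notMem (by simp [d10]), Finset.card_singleton]
  have hsw : ∀ p u w : V, ({p,u,w} : Finset V) = {p,w,u} := by
    intro p u w; ext z; simp; tauto
  have hrot : ∀ p u w : V, ({p,u,w} : Finset V) = {u,w,p} := by
    intro p u w; ext z; simp; tauto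
  have five : ∀ p q r : V, c {p,q,r} ≠ 0 →
      ∃ u0 u1 u2 u3 u4 : V,
        u0≠u1 ∧ u0≠u2 ∧ u0≠u3 ∧ u0≠u4 ∧ u1≠u2 ∧ u1≠u3 ∧ u1≠u4 ∧ u2≠u3 ∧ u2≠u4 ∧ u3≠u4 ∧
        c {p,u0,u1} ≠ 0 ∧ c {p,u0,u2} ≠ 0 ∧ c {p,u1,u3} ≠ 0 ∧ c {p,u3,u4} ≠ 0 := by
    intro p q r h
    obtain ⟨hpq, hpr, hqr⟩ := hD h
    obtain ⟨y2, hy2p, hy2q, hy2r, h2⟩ := hA p q r h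
    have h' : c {p,r,q} ≠ 0 := by rw [hsw]; exact h
    obtain ⟨y3, hy3p, hy3r, hy3q, h3⟩ := hA p r q h'
    have hy3y2 : y3 ≠ y2 := by
      intro hh
      have h3b : c {p,r,y2} ≠ 0 := hh ▸ h3
      exact hB p q r y2 hpq hpr (Ne.symm hy2p) hqr (Ne.symm hy2q) (Ne.symm hy2r)
        (hKsub h).1 (hKsub h).2.1 (hKsub h2).2.1 (hKsub h).2.2 (hKsub h2).2.2 (hKsub h3b).2.2
    have h3' : c {p,y3,r} ≠ 0 := by rw [hsw]; exact h3
    obtain ⟨y4, hy4p, hy4y3, hy4r, h4⟩ := hA p y3 r h3'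
    have hy4q : y4 ≠ q := by
      intro hh
      have h4b : c {p,y3,q} ≠ 0 := hh ▸ h4
      exact hB p q r y3 hpq hpr (Ne.symm hy3p) hqr (Ne.symm hy3q) (Ne.symm hy3r)
        (hKsub h).1 (hKsub h).2.1 (hKsub h3).2.1 (hKsub h).2.2
        (by rw [Finset.pair_comm]; exact (hKsub h4b).2.2) (hKsub h3).2.2
    have hy4y2 : y4 ≠ y2 := by
      intro hh
      have h4b : c {p,y3,y2} ≠ 0 := hh ▸ h4
      exact hC p q r y3 y2 (Ne.symm hpq) (Ne.symm hpr) hy3p hy2p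
        hqr (Ne.symm hy3q) (Ne.symm hy2q) (Ne.symm hy3r) (Ne.symm hy2r) hy3y2
        (hKsub h).1 (hKsub h).2.1 (hKsub h3).2.1 (hKsub h2).2.1
        (hKsub h).2.2 (hKsub h3).2.2 (hKsub h4b).2.2
        (by rw [Finset.pair_comm]; exact (hKsub h2).2.2)
    exact ⟨q, r, y2, y3, y4, hqr, Ne.symm hy2q, Ne.symm hy3q, Ne.symm hy4q,
      Ne.symm hy2r, Ne.symm hy3r, Ne.symm hy4r, Ne.symm hy3y2, Ne.symm hy4y2,
      Ne.symm hy4y3, h, h2, h3, h4⟩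
  obtain ⟨σ0, hσ0⟩ : ∃ σ, c σ ≠ 0 := by
    by_contra hno; push_neg at hno
    exact hc (funext fun σ => hno σ)
  obtain ⟨v, a0, b0, hva0, hvb0, ha0b0, hσ0eq⟩ := Finset.card_eq_three.mp (hsupp _ hσ0).2
  rw [hσ0eq] at hσ0
  set Nv : Finset V := univ.filter (fun u => ∃ w, c {v,u,w} ≠ 0) with hNvdef
  have hNvmem : ∀ u : V, u ∈ Nv ↔ ∃ w, c {v,u,w} ≠ 0 := by
    intro u; simp [hNvdef]
  set EF : Finset (Finset V) := univ.filter (fun e => ∃ u w : V, c {v,u,w} ≠ 0 ∧ e = {u,w}) with hEFdef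
  have hEFmem : ∀ e, e ∈ EF ↔ ∃ u w : V, c {v,u,w} ≠ 0 ∧ e = {u,w} := by
    intro e; simp [hEFdef]
  have hEsum : 2 * EF.card = ∑ u ∈ univ, (EF.filter (fun e => u ∈ e)).card := by
    have h1 : ∀ e ∈ EF, e.card = 2 := by
      intro e he
      obtain ⟨u, w, hw, rfl⟩ := (hEFmem e).mp he
      rw [Finset.card_insert_of_notMem (by simp [(hD hw).2.2]), Finset.card_singleton]
    calc 2 * EF.card = ∑ _e ∈ EF, 2 := by rw [Finset.sum_const, smul_eq_mul, mul_comm]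
      _ = ∑ e ∈ EF, e.card := (Finset.sum_congr rfl fun e he => (h1 e he).symm)
      _ = ∑ e ∈ EF, ∑ u ∈ univ, (if u ∈ e then 1 else 0) := by
          refine Finset.sum_congr rfl fun e _he => ?_
          rw [← Finset.card_filter]
          congr 1
          ext z; simp
      _ = ∑ u ∈ univ, ∑ e ∈ EF, (if u ∈ e then 1 else 0) := Finset.sum_comm
      _ = ∑ u ∈ univ, (EF.filter (fun e => u ∈ e)).card := by
          refine Finset.sum_congr rfl fun u _ => ?_
          rw [Finset.card_filter]
  have hpairne : ∀ u w1 w2 : V, u ≠ w1 → w1 ≠ w2 → ({u,w1} : Finset V) ≠ {u,w2} := by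
    intro u w1 w2 hu hw h
    have hm : w1 ∈ ({u,w2} : Finset V) := by rw [← h]; simp
    simp at hm
    rcases hm with h'|h'
    · exact hu h'.symm
    · exact hw h'
  have hdeg2 : ∀ u ∈ Nv, 2 ≤ (EF.filter (fun e => u ∈ e)).card := by
    intro u hu
    obtain ⟨w, hw⟩ := (hNvmem u).mp hu
    obtain ⟨y, hyv, hyu, hyw, hy⟩ := hA v u w hw
    have he1 : ({u,w} : Finset V) ∈ EF.filter (fun e => u ∈ e) :=
      Finset.mem_filter.mpr ⟨(hEFmem _).mpr ⟨u, w, hw, rfl⟩, by simp⟩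
    have he2 : ({u,y} : Finset V) ∈ EF.filter (fun e => u ∈ e) :=
      Finset.mem_filter.mpr ⟨(hEFmem _).mpr ⟨u, y, hy, rfl⟩, by simp⟩
    have hne : ({u,w} : Finset V) ≠ {u,y} := hpairne u w y (hD hw).2.2 (Ne.symm hyw)
    calc 2 = ({({u,w} : Finset V), ({u,y} : Finset V)} : Finset (Finset V)).card := by
          rw [Finset.card_insert_of_notMem (by simp [hne]), Finset.card_singleton]
      _ ≤ _ := Finset.card_le_card (by
          intro e he; simp at he
          rcases he with rfl|rfl
          exacts [he1, he2])
  have hNvEF : Nv.card ≤ EF.card := by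
    have h1 : ∑ _u ∈ Nv, 2 ≤ ∑ u ∈ Nv, (EF.filter (fun e => u ∈ e)).card :=
      Finset.sum_le_sum hdeg2
    have h2 : ∑ u ∈ Nv, (EF.filter (fun e => u ∈ e)).card
        ≤ ∑ u ∈ univ, (EF.filter (fun e => u ∈ e)).card :=
      Finset.sum_le_sum_of_subset (Finset.subset_univ _)
    rw [Finset.sum_const, smul_eq_mul] at h1
    omega
  have hexall : ∀ e : Finset V, ∃ x : V,
      (∃ y, y ∉ e ∧ y ≠ v ∧ c (insert y e) ≠ 0) → (x ∉ e ∧ x ≠ v ∧ c (insert x e) ≠ 0) := by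
    intro e
    by_cases h : ∃ y, y ∉ e ∧ y ≠ v ∧ c (insert y e) ≠ 0
    · exact ⟨h.choose, fun _ => h.choose_spec⟩
    · exact ⟨v, fun hh => absurd hh h⟩
  choose xF hxFspec using hexall
  have hxF : ∀ u w : V, c {v,u,w} ≠ 0 →
      xF {u,w} ≠ u ∧ xF {u,w} ≠ w ∧ xF {u,w} ≠ v ∧ c {u,w,xF {u,w}} ≠ 0 := by
    intro u w hadj
    have hc' : c ({u,w,v} : Finset V) ≠ 0 := by
      rw [show ({u,w,v} : Finset V) = {v,u,w} from by ext z; simp; tauto]; exact hadj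
    obtain ⟨y, hyu, hyw, hyv, hy⟩ := hA u w v hc'
    have hex : ∃ y, y ∉ ({u,w} : Finset V) ∧ y ≠ v ∧ c (insert y ({u,w} : Finset V)) ≠ 0 :=
      ⟨y, by simp [hyu, hyw], hyv,
        by rw [show insert y ({u,w} : Finset V) = {u,w,y} from by ext z; simp; tauto]; exact hy⟩
    have hspec : xF {u,w} ∉ ({u,w} : Finset V) ∧ xF {u,w} ≠ v ∧
        c (insert (xF {u,w}) ({u,w} : Finset V)) ≠ 0 := hxFspec _ hex
    obtain ⟨hn1, hn2, hn3⟩ := hspec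
    simp only [Finset.mem_insert, Finset.mem_singleton] at hn1
    push_neg at hn1
    refine ⟨hn1.1, hn1.2, hn2, ?_⟩
    rwa [show ({u,w,xF {u,w}} : Finset V) = insert (xF {u,w}) ({u,w} : Finset V) from by
      ext z; simp; tauto]
  have hxout : ∀ u w : V, c {v,u,w} ≠ 0 → ({v, xF {u,w}} : Finset V) ∉ K := by
    intro u w hadj hk
    obtain ⟨h1, h2, h3, h4⟩ := hxF u w hadj
    exact hB v u w (xF {u,w}) (hD hadj).1 (hD hadj).2.1 (Ne.symm h3) (hD hadj).2.2
      (Ne.symm h1) (Ne.symm h2) (hKsub hadj).1 (hKsub hadj).2.1 hk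
      (hKsub hadj).2.2 (hKsub h4).2.1 (hKsub h4).2.2
  have share : ∀ u w q x' : V, c {v,u,w} ≠ 0 → c {v,u,q} ≠ 0 → w ≠ q →
      x' ≠ v → x' ≠ u → x' ≠ w → x' ≠ q →
      ({u,x'} : Finset V) ∈ K → ({w,x'} : Finset V) ∈ K → ({q,x'} : Finset V) ∈ K → False := by
    intro u w q x' huw huq hwq hxv hxu hxw hxq exu exw exq
    exact hC u v w x' q (hD huw).1 (Ne.symm (hD huw).2.2) hxu (Ne.symm (hD huq).2.2)
      (hD huw).2.1 (Ne.symm hxv) (hD huq).2.1 (Ne.symm hxw) hwq hxq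
      (by rw [Finset.pair_comm]; exact (hKsub huw).1)
      (hKsub huw).2.2 exu (hKsub huq).2.2
      (hKsub huw).2.1 exw (by rw [Finset.pair_comm]; exact exq)
      (by rw [Finset.pair_comm]; exact (hKsub huq).2.1)
  have disj : ∀ u w p' q x' : V, c {v,u,w} ≠ 0 → c {v,p',q} ≠ 0 →
      u ≠ p' → u ≠ q → w ≠ p' → w ≠ q →
      x' ≠ v → x' ≠ u → x' ≠ w → x' ≠ p' → x' ≠ q →
      ({u,x'} : Finset V) ∈ K → ({w,x'} : Finset V) ∈ K → ({p',x'} : Finset V) ∈ K →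
      ({q,x'} : Finset V) ∈ K → ({v,x'} : Finset V) ∉ K → False := by
    intro u w p' q x' huw hpq d1 d2 d3 d4 e0 e1 e2 e3 e4 exu exw exp exq hnvx
    by_cases hup : ({u,p'} : Finset V) ∈ K
    · by_cases hwq : ({w,q} : Finset V) ∈ K
      · exact hC x' u w q p' (Ne.symm e1) (Ne.symm e2) (Ne.symm e4) (Ne.symm e3)
          (hD huw).2.2 d2 d1 d4 d3 (Ne.symm (hD hpq).2.2)
          (by rw [Finset.pair_comm]; exact exu) (by rw [Finset.pair_comm]; exact exw)
          (by rw [Finset.pair_comm]; exact exq) (by rw [Finset.pair_comm]; exact exp)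
          (hKsub huw).2.2 hwq (by rw [Finset.pair_comm]; exact (hKsub hpq).2.2)
          (by rw [Finset.pair_comm]; exact hup)
      · refine hns ⟨v, w, x', q, ?_, (hKsub huw).2.1, exw, by rw [Finset.pair_comm]; exact exq,
          by rw [Finset.pair_comm]; exact (hKsub hpq).2.1, hnvx, hwq⟩
        rw [Finset.card_insert_of_notMem (by simp [(hD huw).2.1, Ne.symm e0, (hD hpq).2.1]),
          Finset.card_insert_of_notMem (by simp [Ne.symm e2, d4]),
          Finset.card_insert_of_notMem (by simp [e4]), Finset.card_singleton]
    · refine hns ⟨v, u, x', p', ?_, (hKsub huw).1, exu,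
        by rw [Finset.pair_comm]; exact exp,
        by rw [Finset.pair_comm]; exact (hKsub hpq).1, hnvx, hup⟩
      rw [Finset.card_insert_of_notMem (by simp [(hD huw).1, Ne.symm e0, (hD hpq).1]),
        Finset.card_insert_of_notMem (by simp [Ne.symm e1, d1]),
        Finset.card_insert_of_notMem (by simp [e3]), Finset.card_singleton]
  have hinjEF : ∀ e ∈ EF, ∀ f ∈ EF, xF e = xF f → e = f := by
    intro e he f hf hxef
    by_contra hne
    obtain ⟨u, w, huw, rfl⟩ := (hEFmem e).mp he
    obtain ⟨p', q, hpq, rfl⟩ := (hEFmem f).mp hf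
    obtain ⟨g1, g2, g3, g4⟩ := hxF u w huw
    obtain ⟨f1, f2, f3, f4⟩ := hxF p' q hpq
    rw [← hxef] at f1 f2 f4
    have hnvx : ({v, xF {u,w}} : Finset V) ∉ K := hxout u w huw
    by_cases h1 : u = p'
    · subst h1
      have hwq : w ≠ q := by intro hh; exact hne (by rw [hh])
      exact share u w q (xF {u,w}) huw hpq hwq g3 g1 g2 f2
        (hKsub g4).2.1 (hKsub g4).2.2 (hKsub f4).2.2
    by_cases h2 : u = q
    · have hpq2 : c {v,u,p'} ≠ 0 := by rw [h2, hsw]; exact hpq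
      have hwp : w ≠ p' := by
        intro hh; exact hne (by rw [hh, ← h2, Finset.pair_comm])
      exact share u w p' (xF {u,w}) huw hpq2 hwp g3 g1 g2 f1
        (hKsub g4).2.1 (hKsub g4).2.2 (hKsub f4).2.1
    by_cases h3 : w = p'
    · have huw2 : c {v,w,u} ≠ 0 := by rw [hsw]; exact huw
      have hpq2 : c {v,w,q} ≠ 0 := by rw [h3]; exact hpq
      have huq : u ≠ q := h2
      exact share w u q (xF {u,w}) huw2 hpq2 huq g3 g2 g1 f2
        (hKsub g4).2.2 (hKsub g4).2.1 (hKsub f4).2.2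
    by_cases h4 : w = q
    · have huw2 : c {v,w,u} ≠ 0 := by rw [hsw]; exact huw
      have hpq2 : c {v,w,p'} ≠ 0 := by rw [h4, hsw]; exact hpq
      exact share w u p' (xF {u,w}) huw2 hpq2 h1 g3 g2 g1 f1
        (hKsub g4).2.2 (hKsub g4).2.1 (hKsub f4).2.1
    exact disj u w p' q (xF {u,w}) huw hpq h1 h2 h3 h4 g3 g1 g2 f1 f2
      (hKsub g4).2.1 (hKsub g4).2.2 (hKsub f4).2.1 (hKsub f4).2.2 hnvx
  set X : Finset V := EF.image xF with hXdef
  have hXcard : X.card = EF.card := Finset.card_image_of_injOn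
    (by intro e he f hf h; exact hinjEF e (by simpa using he) f (by simpa using hf) h)
  have hXprop : ∀ x ∈ X, x ≠ v ∧ ({v,x} : Finset V) ∉ K := by
    intro x hx
    obtain ⟨e, he, rfl⟩ := Finset.mem_image.mp hx
    obtain ⟨u, w, huw, rfl⟩ := (hEFmem e).mp he
    exact ⟨(hxF u w huw).2.2.1, hxout u w huw⟩
  have hNvK : ∀ u ∈ Nv, ({v,u} : Finset V) ∈ K := by
    intro u hu; obtain ⟨w, hw⟩ := (hNvmem u).mp hu; exact (hKsub hw).1
  have hvNv : v ∉ Nv := by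
    intro hv
    obtain ⟨w, hw⟩ := (hNvmem v).mp hv
    exact (hD hw).1 rfl
  have hvX : v ∉ X := fun hv => (hXprop v hv).1 rfl
  have hNvX : Disjoint Nv X := by
    rw [Finset.disjoint_left]
    intro u hu hux
    exact (hXprop u hux).2 (hNvK u hu)
  set S : Finset V := insert v (Nv ∪ X) with hSdef
  have hScard : S.card = 1 + Nv.card + X.card := by
    rw [hSdef, Finset.card_insert_of_notMem (by simp [hvNv, hvX]),
      Finset.card_union_of_disjoint hNvX]
    omega
  have hSle : S.card ≤ Fintype.card V := by
    rw [← Finset.card_univ]; exact Finset.card_le_card (Finset.subset_univ _)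
  obtain ⟨u0,u1,u2,u3,u4, d01,d02,d03,d04,d12,d13,d14,d23,d24,d34, h01,h02,h13,h34⟩ :=
    five v a0 b0 hσ0
  have hu0 : u0 ∈ Nv := (hNvmem _).mpr ⟨u1, h01⟩
  have hu1 : u1 ∈ Nv := (hNvmem _).mpr ⟨u0, by rw [hsw]; exact h01⟩
  have hu2 : u2 ∈ Nv := (hNvmem _).mpr ⟨u0, by rw [hsw]; exact h02⟩
  have hu3 : u3 ∈ Nv := (hNvmem _).mpr ⟨u1, by rw [hsw]; exact h13⟩
  have hu4 : u4 ∈ Nv := (hNvmem _).mpr ⟨u3, by rw [hsw]; exact h34⟩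
  have hNv5 : 5 ≤ Nv.card := by
    have hsub5 : ({u0,u1,u2,u3,u4} : Finset V) ⊆ Nv := by
      intro z hz; simp at hz; rcases hz with rfl|rfl|rfl|rfl|rfl <;> assumption
    calc 5 = ({u0,u1,u2,u3,u4} : Finset V).card := by
          rw [Finset.card_insert_of_notMem (by simp [d01,d02,d03,d04]),
            Finset.card_insert_of_notMem (by simp [d12,d13,d14]),
            Finset.card_insert_of_notMem (by simp [d23,d24]),
            Finset.card_insert_of_notMem (by simp [d34]), Finset.card_singleton]
      _ ≤ Nv.card := Finset.card_le_card hsub5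
  by_cases hbig : 6 ≤ Nv.card ∨ 6 ≤ EF.card
  · rcases hbig with h6|h6 <;> omega
  push_neg at hbig
  have hNv5' : Nv.card = 5 := by omega
  have hEF5 : EF.card = 5 := by omega
  have hsub5 : ({u0,u1,u2,u3,u4} : Finset V) ⊆ Nv := by
    intro z hz; simp at hz; rcases hz with rfl|rfl|rfl|rfl|rfl <;> assumption
  have hc5 : ({u0,u1,u2,u3,u4} : Finset V).card = 5 := by
    rw [Finset.card_insert_of_notMem (by simp [d01,d02,d03,d04]),
      Finset.card_insert_of_notMem (by simp [d12,d13,d14]),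
      Finset.card_insert_of_notMem (by simp [d23,d24]),
      Finset.card_insert_of_notMem (by simp [d34]), Finset.card_singleton]
  have hNveq : Nv = {u0,u1,u2,u3,u4} := (Finset.eq_of_subset_of_card_le hsub5 (by omega)).symm
  have hsumle : ∑ u ∈ Nv, (EF.filter (fun e => u ∈ e)).card ≤ 10 := by
    have h2' : ∑ u ∈ Nv, (EF.filter (fun e => u ∈ e)).card
        ≤ ∑ u ∈ univ, (EF.filter (fun e => u ∈ e)).card :=
      Finset.sum_le_sum_of_subset (Finset.subset_univ _)
    omega
  have hdegle : ∀ u ∈ Nv, (EF.filter (fun e => u ∈ e)).card ≤ 2 := by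
    intro u hu
    by_contra hgt
    push_neg at hgt
    have hrest : ∑ z ∈ Nv.erase u, 2 ≤ ∑ z ∈ Nv.erase u, (EF.filter (fun e => z ∈ e)).card :=
      Finset.sum_le_sum (fun z hz => hdeg2 z (Finset.mem_of_mem_erase hz))
    rw [Finset.sum_const, smul_eq_mul, Finset.card_erase_of_mem hu, hNv5'] at hrest
    have hsplit := Finset.add_sum_erase Nv (fun z => (EF.filter (fun e => z ∈ e)).card) hu
    beta_reduce at hsplit
    omega
  have hnbd : ∀ u w1 w2 w : V, c {v,u,w1} ≠ 0 → c {v,u,w2} ≠ 0 → w1 ≠ w2 →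
      c {v,u,w} ≠ 0 → w = w1 ∨ w = w2 := by
    intro u w1 w2 w hw1 hw2 h12 hw
    by_contra hcon
    push_neg at hcon
    have hu : u ∈ Nv := (hNvmem _).mpr ⟨w1, hw1⟩
    have he1 : ({u,w1} : Finset V) ∈ EF.filter (fun e => u ∈ e) :=
      Finset.mem_filter.mpr ⟨(hEFmem _).mpr ⟨u, w1, hw1, rfl⟩, by simp⟩
    have he2 : ({u,w2} : Finset V) ∈ EF.filter (fun e => u ∈ e) :=
      Finset.mem_filter.mpr ⟨(hEFmem _).mpr ⟨u, w2, hw2, rfl⟩, by simp⟩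
    have he3 : ({u,w} : Finset V) ∈ EF.filter (fun e => u ∈ e) :=
      Finset.mem_filter.mpr ⟨(hEFmem _).mpr ⟨u, w, hw, rfl⟩, by simp⟩
    have hne12 : ({u,w1} : Finset V) ≠ {u,w2} := hpairne u w1 w2 (hD hw1).2.2 h12
    have hne13 : ({u,w1} : Finset V) ≠ {u,w} := hpairne u w1 w (hD hw1).2.2 (Ne.symm hcon.1)
    have hne23 : ({u,w2} : Finset V) ≠ {u,w} := hpairne u w2 w (hD hw2).2.2 (Ne.symm hcon.2)
    have h3le : 3 ≤ (EF.filter (fun e => u ∈ e)).card := by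
      calc 3 = ({({u,w1} : Finset V), ({u,w2} : Finset V), ({u,w} : Finset V)} :
            Finset (Finset V)).card := by
            rw [Finset.card_insert_of_notMem (by simp [hne12, hne13]),
              Finset.card_insert_of_notMem (by simp [hne23]), Finset.card_singleton]
        _ ≤ _ := Finset.card_le_card (by
            intro e he; simp at he
            rcases he with rfl|rfl|rfl
            exacts [he1, he2, he3])
    have := hdegle u hu
    omega
  -- the second neighbour of u4 must be u2, closing the 5-cycle
  have h34' : c {v,u4,u3} ≠ 0 := by rw [hsw]; exact h34
  obtain ⟨y, hyv, hyu4, hyu3, hy⟩ := hA v u4 u3 h34'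
  have h42 : c {v,u4,u2} ≠ 0 := by
    have hyNv : y ∈ Nv := (hNvmem _).mpr ⟨u4, by rw [hsw]; exact hy⟩
    have hyu0 : y ≠ u0 := by
      intro hh
      have hX0 : c {v,u0,u4} ≠ 0 := by rw [hsw]; exact (hh ▸ hy)
      rcases hnbd u0 u1 u2 u4 h01 h02 d12 hX0 with h|h
      exacts [d14 h.symm, d24 h.symm]
    have hyu1 : y ≠ u1 := by
      intro hh
      have h10 : c {v,u1,u0} ≠ 0 := by rw [hsw]; exact h01
      have hX1 : c {v,u1,u4} ≠ 0 := by rw [hsw]; exact (hh ▸ hy)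
      rcases hnbd u1 u0 u3 u4 h10 h13 d03 hX1 with h|h
      exacts [d04 h.symm, d34 h.symm]
    rw [hNveq] at hyNv
    simp at hyNv
    rcases hyNv with rfl|rfl|rfl|rfl|rfl
    · exact absurd rfl hyu0
    · exact absurd rfl hyu1
    · exact hy
    · exact absurd rfl hyu3
    · exact absurd rfl hyu4
  have A51 : c {v,u2,u0} ≠ 0 := by rw [hsw]; exact h02
  have hpne : ∀ a b p q : V, a ≠ p → a ≠ q → ({a,b} : Finset V) ≠ {p,q} := by
    intro a b p q h1 h2 h
    have hm : a ∈ ({p,q} : Finset V) := by rw [← h]; simp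
    simp only [Finset.mem_insert, Finset.mem_singleton] at hm
    rcases hm with h'|h'
    exacts [h1 h', h2 h']
  have hpne' : ∀ a b p q : V, b ≠ p → b ≠ q → ({a,b} : Finset V) ≠ {p,q} := by
    intro a b p q h1 h2 h
    have hm : b ∈ ({p,q} : Finset V) := by rw [← h]; simp
    simp only [Finset.mem_insert, Finset.mem_singleton] at hm
    rcases hm with h'|h'
    exacts [h1 h', h2 h']
  have hCsub : ({({u0,u1}:Finset V), {u1,u3}, {u3,u4}, {u4,u2}, {u2,u0}} : Finset (Finset V)) ⊆ EF := by
    intro e he; simp at he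
    rcases he with rfl|rfl|rfl|rfl|rfl
    · exact (hEFmem _).mpr ⟨u0,u1,h01,rfl⟩
    · exact (hEFmem _).mpr ⟨u1,u3,h13,rfl⟩
    · exact (hEFmem _).mpr ⟨u3,u4,h34,rfl⟩
    · exact (hEFmem _).mpr ⟨u4,u2,h42,rfl⟩
    · exact (hEFmem _).mpr ⟨u2,u0,A51,rfl⟩
  have ne1 : ({u0,u1}:Finset V) ≠ {u1,u3} := hpne _ _ _ _ d01 d03
  have ne2 : ({u0,u1}:Finset V) ≠ {u3,u4} := hpne _ _ _ _ d03 d04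
  have ne3 : ({u0,u1}:Finset V) ≠ {u4,u2} := hpne _ _ _ _ d04 d02
  have ne4 : ({u0,u1}:Finset V) ≠ {u2,u0} := hpne' _ _ _ _ d12 (Ne.symm d01)
  have ne5 : ({u1,u3}:Finset V) ≠ {u3,u4} := hpne _ _ _ _ d13 d14
  have ne6 : ({u1,u3}:Finset V) ≠ {u4,u2} := hpne _ _ _ _ d14 d12
  have ne7 : ({u1,u3}:Finset V) ≠ {u2,u0} := hpne _ _ _ _ d12 (Ne.symm d01)
  have ne8 : ({u3,u4}:Finset V) ≠ {u4,u2} := hpne _ _ _ _ d34 (Ne.symm d23)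
  have ne9 : ({u3,u4}:Finset V) ≠ {u2,u0} := hpne _ _ _ _ (Ne.symm d23) (Ne.symm d03)
  have ne10 : ({u4,u2}:Finset V) ≠ {u2,u0} := hpne _ _ _ _ (Ne.symm d24) (Ne.symm d04)
  have hCcard : ({({u0,u1}:Finset V), {u1,u3}, {u3,u4}, {u4,u2}, {u2,u0}} : Finset (Finset V)).card = 5 := by
    rw [Finset.card_insert_of_notMem (by simp [ne1,ne2,ne3,ne4]),
      Finset.card_insert_of_notMem (by simp [ne5,ne6,ne7]),
      Finset.card_insert_of_notMem (by simp [ne8,ne9]),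
      Finset.card_insert_of_notMem (by simp [ne10]), Finset.card_singleton]
  have hEFC : EF = ({({u0,u1}:Finset V), {u1,u3}, {u3,u4}, {u4,u2}, {u2,u0}} : Finset (Finset V)) :=
    (Finset.eq_of_subset_of_card_le hCsub (by omega)).symm
  obtain ⟨hx11, hx12, hx13, hx14⟩ := hxF u0 u1 h01
  obtain ⟨hx31, hx32, hx33, hx34⟩ := hxF u3 u4 h34
  obtain ⟨hx41, hx42, hx43, hx44⟩ := hxF u4 u2 h42
  have hXeq : X = ({xF {u0,u1}, xF {u1,u3}, xF {u3,u4}, xF {u4,u2}, xF {u2,u0}} : Finset V) := by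
    rw [hXdef, hEFC]
    simp [Finset.image_insert, Finset.image_singleton]
  have outer : ∀ p q r s t x' : V,
      c {v,p,q} ≠ 0 → c {v,q,r} ≠ 0 → c {v,r,s} ≠ 0 → c {v,s,t} ≠ 0 → c {v,t,p} ≠ 0 →
      p≠q → p≠r → p≠s → p≠t → q≠r → q≠s → q≠t → r≠s → r≠t → s≠t →
      x' ≠ v → x' ≠ p → x' ≠ q →
      ({p,x'} : Finset V) ∈ K → ({q,x'} : Finset V) ∈ K → ({v,x'} : Finset V) ∉ K →
      ({x',r} : Finset V) ∉ K ∧ ({x',s} : Finset V) ∉ K ∧ ({x',t} : Finset V) ∉ K := by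
    intro p q r s t x' hpq hqr hrs hst htp n1 n2 n3 n4 n5 n6 n7 n8 n9 n10 m1 m2 m3 epx eqx hvx
    have hpr : ({p,r} : Finset V) ∉ K := fun hk =>
      hB v p q r (hD hpq).1 (hD hpq).2.1 (hD hqr).2.1 n1 n2 n5
        (hKsub hpq).1 (hKsub hpq).2.1 (hKsub hqr).2.1 (hKsub hpq).2.2 hk (hKsub hqr).2.2
    have hqs : ({q,s} : Finset V) ∉ K := fun hk =>
      hB v q r s (hD hpq).2.1 (hD hqr).2.1 (hD hrs).2.1 n5 n6 n8
        (hKsub hpq).2.1 (hKsub hqr).2.1 (hKsub hrs).2.1 (hKsub hqr).2.2 hk (hKsub hrs).2.2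
    refine ⟨fun hk => ?_, fun hk => ?_, fun hk => ?_⟩
    · have hxr : x' ≠ r := fun hh => hpr (hh ▸ epx)
      exact hns ⟨v, p, x', r, by
          rw [Finset.card_insert_of_notMem (by simp [(hD hpq).1, Ne.symm m1, (hD hqr).2.1]),
            Finset.card_insert_of_notMem (by simp [Ne.symm m2, n2]),
            Finset.card_insert_of_notMem (by simp [hxr]), Finset.card_singleton],
        (hKsub hpq).1, epx, hk, by rw [Finset.pair_comm]; exact (hKsub hqr).2.1, hvx, hpr⟩
    · have hxs : x' ≠ s := fun hh => hqs (hh ▸ eqx)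
      exact hns ⟨v, q, x', s, by
          rw [Finset.card_insert_of_notMem (by simp [(hD hpq).2.1, Ne.symm m1, (hD hrs).2.1]),
            Finset.card_insert_of_notMem (by simp [Ne.symm m3, n6]),
            Finset.card_insert_of_notMem (by simp [hxs]), Finset.card_singleton],
        (hKsub hpq).2.1, eqx, hk, by rw [Finset.pair_comm]; exact (hKsub hrs).2.1, hvx, hqs⟩
    · have hxt : x' ≠ t := by
        intro hh
        exact hB v p q t (hD hpq).1 (hD hpq).2.1 (hD htp).1 n1 n4 n7
          (hKsub hpq).1 (hKsub hpq).2.1 (hKsub htp).1 (hKsub hpq).2.2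
          (by rw [Finset.pair_comm]; exact (hKsub htp).2.2) (hh ▸ eqx)
      exact hC p v q x' t (hD hpq).1 (Ne.symm n1) m2 (Ne.symm n4)
        (hD hpq).2.1 (Ne.symm m1) (hD htp).1 (Ne.symm m3) n7 hxt
        (by rw [Finset.pair_comm]; exact (hKsub hpq).1) (hKsub hpq).2.2 epx
        (by rw [Finset.pair_comm]; exact (hKsub htp).2.2)
        (hKsub hpq).2.1 eqx hk (by rw [Finset.pair_comm]; exact (hKsub htp).1)
  have hvne : ∀ z x : V, ({v,z} : Finset V) ∈ K → ({v,x} : Finset V) ∉ K → z ≠ x :=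
    fun z x h1 h2 hh => h2 (hh ▸ h1)
  have o1 := outer u0 u1 u3 u4 u2 (xF {u0,u1}) h01 h13 h34 h42 A51
    d01 d03 d04 d02 d13 d14 d12 d34 (Ne.symm d23) (Ne.symm d24)
    hx13 hx11 hx12 (hKsub hx14).2.1 (hKsub hx14).2.2 (hxout u0 u1 h01)
  have o3 := outer u3 u4 u2 u0 u1 (xF {u3,u4}) h34 h42 A51 h01 h13
    d34 (Ne.symm d23) (Ne.symm d03) (Ne.symm d13) (Ne.symm d24) (Ne.symm d04) (Ne.symm d14)
    (Ne.symm d02) (Ne.symm d12) d01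
    hx33 hx31 hx32 (hKsub hx34).2.1 (hKsub hx34).2.2 (hxout u3 u4 h34)
  have o4 := outer u4 u2 u0 u1 u3 (xF {u4,u2}) h42 A51 h01 h13 h34
    (Ne.symm d24) (Ne.symm d04) (Ne.symm d14) (Ne.symm d34) (Ne.symm d02) (Ne.symm d12) d23
    d01 d03 d13
    hx43 hx41 hx42 (hKsub hx44).2.1 (hKsub hx44).2.2 (hxout u4 u2 h42)
  have e1m : ({u0,u1}:Finset V) ∈ EF := (hEFmem _).mpr ⟨u0,u1,h01,rfl⟩
  have e3m : ({u3,u4}:Finset V) ∈ EF := (hEFmem _).mpr ⟨u3,u4,h34,rfl⟩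
  have e4m : ({u4,u2}:Finset V) ∈ EF := (hEFmem _).mpr ⟨u4,u2,h42,rfl⟩
  have hexcl : ∀ z : V, ({xF {u0,u1}, z} : Finset V) ∈ K → z ≠ xF {u0,u1} → z ∈ S →
      z = u0 ∨ z = u1 ∨ z = xF {u1,u3} ∨ z = xF {u2,u0} := by
    intro z hz hzx hzS
    have hzS' : z = v ∨ z ∈ Nv ∨ z ∈ X := by
      rw [hSdef] at hzS
      simp only [Finset.mem_insert, Finset.mem_union] at hzS
      exact hzS
    rcases hzS' with hzv|hzN|hzX
    · exfalso
      apply hxout u0 u1 h01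
      rw [hzv] at hz
      rw [Finset.pair_comm] at hz
      exact hz
    · rw [hNveq] at hzN; simp at hzN
      rcases hzN with rfl|rfl|rfl|rfl|rfl
      · exact Or.inl rfl
      · exact Or.inr (Or.inl rfl)
      · exact absurd hz o1.2.2
      · exact absurd hz o1.1
      · exact absurd hz o1.2.1
    · rw [hXeq] at hzX; simp at hzX
      rcases hzX with rfl|rfl|rfl|rfl|rfl
      · exact absurd rfl hzx
      · exact Or.inr (Or.inr (Or.inl rfl))
      · exfalso
        have hu1x3 : u1 ≠ xF {u3,u4} := hvne u1 (xF {u3,u4}) (hNvK u1 hu1) (hxout u3 u4 h34)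
        have hu3x1 : u3 ≠ xF {u0,u1} := hvne u3 (xF {u0,u1}) (hNvK u3 hu3) (hxout u0 u1 h01)
        have hx1x3 : xF {u0,u1} ≠ xF {u3,u4} := fun hh => ne2 (hinjEF _ e1m _ e3m hh)
        refine hns ⟨u1, xF {u0,u1}, xF {u3,u4}, u3, ?_,
          (hKsub hx14).2.2, hz,
          (by rw [Finset.pair_comm]; exact (hKsub hx34).2.1),
          (by rw [Finset.pair_comm]; exact (hKsub h13).2.2),
          (by rw [Finset.pair_comm]; exact o3.2.2), o1.1⟩
        rw [Finset.card_insert_of_notMem (by simp [Ne.symm hx12, hu1x3, d13]),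
          Finset.card_insert_of_notMem (by simp [hx1x3, Ne.symm hu3x1]),
          Finset.card_insert_of_notMem (by simp [Ne.symm (hvne u3 (xF {u3,u4}) (hNvK u3 hu3) (hxout u3 u4 h34))]),
          Finset.card_singleton]
      · exfalso
        have hu0x4 : u0 ≠ xF {u4,u2} := hvne u0 (xF {u4,u2}) (hNvK u0 hu0) (hxout u4 u2 h42)
        have hu2x1 : u2 ≠ xF {u0,u1} := hvne u2 (xF {u0,u1}) (hNvK u2 hu2) (hxout u0 u1 h01)
        have hx1x4 : xF {u0,u1} ≠ xF {u4,u2} := fun hh => ne3 (hinjEF _ e1m _ e4m hh)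
        refine hns ⟨u0, xF {u0,u1}, xF {u4,u2}, u2, ?_,
          (hKsub hx14).2.1, hz,
          (by rw [Finset.pair_comm]; exact (hKsub hx44).2.2),
          (hKsub A51).2.2,
          (by rw [Finset.pair_comm]; exact o4.1), o1.2.2⟩
        rw [Finset.card_insert_of_notMem (by simp [Ne.symm hx11, hu0x4, d02]),
          Finset.card_insert_of_notMem (by simp [hx1x4, Ne.symm hu2x1]),
          Finset.card_insert_of_notMem (by simp [hx42]),
          Finset.card_singleton]
      · exact Or.inr (Or.inr (Or.inr rfl))
  have hx1five : c {xF {u0,u1}, u0, u1} ≠ 0 := by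
    rw [hrot]
    exact hx14
  obtain ⟨z0,z1,z2,z3,z4, e01,e02,e03,e04,e12,e13,e14,e23,e24,e34, g01,g02,g13,g34⟩ :=
    five (xF {u0,u1}) u0 u1 hx1five
  have kz0 : ({xF {u0,u1}, z0} : Finset V) ∈ K := (hKsub g01).1
  have kz1 : ({xF {u0,u1}, z1} : Finset V) ∈ K := (hKsub g01).2.1
  have kz2 : ({xF {u0,u1}, z2} : Finset V) ∈ K := (hKsub g02).2.1
  have kz3 : ({xF {u0,u1}, z3} : Finset V) ∈ K := (hKsub g13).2.1
  have kz4 : ({xF {u0,u1}, z4} : Finset V) ∈ K := (hKsub g34).2.1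
  have nz0 : z0 ≠ xF {u0,u1} := Ne.symm (hD g01).1
  have nz1 : z1 ≠ xF {u0,u1} := Ne.symm (hD g01).2.1
  have nz2 : z2 ≠ xF {u0,u1} := Ne.symm (hD g02).2.1
  have nz3 : z3 ≠ xF {u0,u1} := Ne.symm (hD g13).2.1
  have nz4 : z4 ≠ xF {u0,u1} := Ne.symm (hD g34).2.1
  have hz5card : ({z0,z1,z2,z3,z4} : Finset V).card = 5 := by
    rw [Finset.card_insert_of_notMem (by simp [e01,e02,e03,e04]),
      Finset.card_insert_of_notMem (by simp [e12,e13,e14]),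
      Finset.card_insert_of_notMem (by simp [e23,e24]),
      Finset.card_insert_of_notMem (by simp [e34]), Finset.card_singleton]
  have hnotall : ¬ ∀ z ∈ ({z0,z1,z2,z3,z4} : Finset V), z ∈ S := by
    intro hall
    have hsubz : ({z0,z1,z2,z3,z4} : Finset V) ⊆
        ({u0, u1, xF {u1,u3}, xF {u2,u0}} : Finset V) := by
      intro z hzm
      have hzS := hall z hzm
      simp only [Finset.mem_insert, Finset.mem_singleton] at hzm
      rcases hzm with rfl|rfl|rfl|rfl|rfl
      · rcases hexcl _ kz0 nz0 hzS with h|h|h|h <;> simp [h]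
      · rcases hexcl _ kz1 nz1 hzS with h|h|h|h <;> simp [h]
      · rcases hexcl _ kz2 nz2 hzS with h|h|h|h <;> simp [h]
      · rcases hexcl _ kz3 nz3 hzS with h|h|h|h <;> simp [h]
      · rcases hexcl _ kz4 nz4 hzS with h|h|h|h <;> simp [h]
    have hle := Finset.card_le_card hsubz
    rw [hz5card] at hle
    have c1 := Finset.card_insert_le u0 ({u1, xF {u1,u3}, xF {u2,u0}} : Finset V)
    have c2 := Finset.card_insert_le u1 ({xF {u1,u3}, xF {u2,u0}} : Finset V)
    have c3 := Finset.card_insert_le (xF {u1,u3}) ({xF {u2,u0}} : Finset V)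
    rw [Finset.card_singleton] at c3
    omega
  push_neg at hnotall
  obtain ⟨zw, hzwm, hzwS⟩ := hnotall
  have hfin : 12 ≤ (insert zw S).card := by
    rw [Finset.card_insert_of_notMem hzwS]
    omega
  calc 12 ≤ (insert zw S).card := hfin
    _ ≤ Finset.univ.card := Finset.card_le_card (Finset.subset_univ _)
    _ = Fintype.card V := Finset.card_univ
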